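/- For every positive integer d and α ∈ (0,1) there is a constant K (depending only on d and α) such that the following holds. Let n ≥ 2k − t, k ≥ t ≥ max{αk, d} be positive integers, Σ a finite alphabet, and let {f_S : binom(S,≤d) → Σ | S ∈ binom([n],k)} satisfy Pr_{(S₁,S₂)∼ν_{n,k,t}}[f_{S₁} ≁ f_{S₂}] ≤ ε, where f_{S₁} ∼ f_{S₂} means f_{S₁}(A) = f_{S₂}(A) for all A ∈ binom(S₁∩S₂,≤d). Then for every integer 0 ≤ i ≤ d, when (S₁,S₂)∼ν_{n,k,t} and T is a uniform (t−d)-element subset of S₁∩S₂, Pr[ f_{S₁}|_{T,i−1} ∼ f_{S₂}|_{T,i−1} and f_{S₁} ≁ f_{S₂} ] ≤ K·k^{−i}·ε, where f_{S₁}|_{T,j} ∼ f_{S₂}|_{T,j} means f_{S₁}(A) = f_{S₂}(A) for all A ∈ binom(S₁∩S₂,≤d) with |A∖T| ≤ j. -/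

import Mathlib

open Finset

/-- The family of `k`-element subsets of `[n]` (modeled as `Fin n`). -/
def ksets (n k : ℕ) : Finset (Finset (Fin n)) := Finset.univ.powersetCard k

/-- The support of `ν_{n,k,t}`: ordered pairs of `k`-element subsets of `[n]`
with intersection of size exactly `t` (the distribution is uniform on this set). -/
def nupairs (n k t : ℕ) : Finset (Finset (Fin n) × Finset (Fin n)) :=
  ((ksets n k) ×ˢ (ksets n k)).filter (fun P => (P.1 ∩ P.2).card = t)

/-- Triples `((S₁,S₂),T)` with `(S₁,S₂)` in the support of `ν_{n,k,t}` and `T` an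
`m`-element subset of `S₁ ∩ S₂`.  Uniform sampling on this set is the same as drawing
`(S₁,S₂) ∼ ν_{n,k,t}` and then a uniform `m`-subset `T ⊆ S₁ ∩ S₂`, as the number of
such `T` is the same for every pair. -/
def triples (n k t m : ℕ) :
    Finset ((Finset (Fin n) × Finset (Fin n)) × Finset (Fin n)) :=
  ((nupairs n k t) ×ˢ (Finset.univ.powersetCard m)).filter
    (fun Q => Q.2 ⊆ Q.1.1 ∩ Q.1.2)

lemma inter_card_of_mem_nupairs {n k t : ℕ} {P : Finset (Fin n) × Finset (Fin n)}
    (h : P ∈ nupairs n k t) : (P.1 ∩ P.2).card = t :=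
  (Finset.mem_filter.1 h).2

lemma card_triples_filter {n k t m : ℕ}
    (p : (Finset (Fin n) × Finset (Fin n)) × Finset (Fin n) → Prop) [DecidablePred p] :
    ((triples n k t m).filter p).card
      = ∑ P ∈ nupairs n k t,
          (((P.1 ∩ P.2).powersetCard m).filter (fun T => p (P, T))).card := by
  have key : ∀ P : Finset (Fin n) × Finset (Fin n),
      ((Finset.univ.powersetCard m).filter (fun T => T ⊆ P.1 ∩ P.2 ∧ p (P, T)))
        = ((P.1 ∩ P.2).powersetCard m).filter (fun T => p (P, T)) := by
    intro P; ext T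
    simp only [Finset.mem_filter, Finset.mem_powersetCard, Finset.subset_univ, true_and]
    tauto
  rw [triples, Finset.filter_filter, Finset.card_filter, Finset.sum_product]
  refine Finset.sum_congr rfl fun P _ => ?_
  rw [← key P, Finset.card_filter]

lemma triples_card (n k t m : ℕ) :
    (triples n k t m).card = (nupairs n k t).card * t.choose m := by
  have h := card_triples_filter (n := n) (k := k) (t := t) (m := m) (fun _ => True)
  simp only [Finset.filter_true] at h
  rw [h]
  rw [Finset.sum_congr rfl (fun P hP => ?_), Finset.sum_const, smul_eq_mul]
  rw [Finset.card_powersetCard, inter_card_of_mem_nupairs hP]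

lemma count_bad_T {n : ℕ} {X A : Finset (Fin n)} {t d i : ℕ} (hX : X.card = t)
    (hAX : A ⊆ X) :
    ((X.powersetCard (t-d)).filter (fun T => i ≤ (A \ T).card)).card
      ≤ A.card.choose i * (t-i).choose (t-d) := by
  have hsub : (X.powersetCard (t-d)).filter (fun T => i ≤ (A \ T).card)
      ⊆ (A.powersetCard i).biUnion (fun B => (X \ B).powersetCard (t-d)) := by
    intro T hT
    simp only [Finset.mem_filter, Finset.mem_powersetCard] at hT
    obtain ⟨⟨hTX, hTc⟩, hi⟩ := hT
    obtain ⟨B, hB, hBc⟩ := Finset.exists_subset_card_eq hi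
    refine Finset.mem_biUnion.2 ⟨B, ?_, ?_⟩
    · exact Finset.mem_powersetCard.2 ⟨hB.trans Finset.sdiff_subset, hBc⟩
    · refine Finset.mem_powersetCard.2 ⟨?_, hTc⟩
      intro x hx
      exact Finset.mem_sdiff.2 ⟨hTX hx, fun hxB => (Finset.mem_sdiff.1 (hB hxB)).2 hx⟩
  calc ((X.powersetCard (t-d)).filter (fun T => i ≤ (A \ T).card)).card
      ≤ ((A.powersetCard i).biUnion (fun B => (X \ B).powersetCard (t-d))).card :=
        Finset.card_le_card hsub
    _ ≤ ∑ B ∈ A.powersetCard i, ((X \ B).powersetCard (t-d)).card := Finset.card_biUnion_le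
    _ = ∑ B ∈ A.powersetCard i, (t-i).choose (t-d) := by
        refine Finset.sum_congr rfl fun B hB => ?_
        obtain ⟨hBA, hBc⟩ := Finset.mem_powersetCard.1 hB
        rw [Finset.card_powersetCard, Finset.card_sdiff_of_subset (hBA.trans hAX), hX, hBc]
    _ = _ := by rw [Finset.sum_const, smul_eq_mul, Finset.card_powersetCard]

lemma event_bound {n k t d i : ℕ} (Γ : Type) [DecidableEq Γ]
    (f : Finset (Fin n) → Finset (Fin n) → Γ) :
    ((triples n k t (t-d)).filter
        (fun Q => (∀ A ⊆ Q.1.1 ∩ Q.1.2, A.card ≤ d → (A \ Q.2).card < i →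
                    f Q.1.1 A = f Q.1.2 A) ∧
                  ¬ ∀ A ⊆ Q.1.1 ∩ Q.1.2, A.card ≤ d → f Q.1.1 A = f Q.1.2 A)).card
      ≤ ((nupairs n k t).filter
          (fun P => ¬ ∀ A ⊆ P.1 ∩ P.2, A.card ≤ d → f P.1 A = f P.2 A)).card
        * (d.choose i * (t-i).choose (t-d)) := by
  rw [card_triples_filter]
  rw [← Finset.sum_filter_add_sum_filter_not (nupairs n k t)
        (fun P => ¬ ∀ A ⊆ P.1 ∩ P.2, A.card ≤ d → f P.1 A = f P.2 A)]
  have hgood : ∀ P ∈ (nupairs n k t).filter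
      (fun P => ¬¬ ∀ A ⊆ P.1 ∩ P.2, A.card ≤ d → f P.1 A = f P.2 A),
      (((P.1 ∩ P.2).powersetCard (t-d)).filter
        (fun T => (∀ A ⊆ P.1 ∩ P.2, A.card ≤ d → (A \ T).card < i →
                    f P.1 A = f P.2 A) ∧
                  ¬ ∀ A ⊆ P.1 ∩ P.2, A.card ≤ d → f P.1 A = f P.2 A)).card = 0 := by
    intro P hP
    rw [Finset.card_eq_zero, Finset.filter_eq_empty_iff]
    intro T _ hcon
    exact hcon.2 (not_not.1 (Finset.mem_filter.1 hP).2)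
  rw [Finset.sum_congr rfl hgood, Finset.sum_const_zero, add_zero]
  have hbad : ∀ P ∈ (nupairs n k t).filter
      (fun P => ¬ ∀ A ⊆ P.1 ∩ P.2, A.card ≤ d → f P.1 A = f P.2 A),
      (((P.1 ∩ P.2).powersetCard (t-d)).filter
        (fun T => (∀ A ⊆ P.1 ∩ P.2, A.card ≤ d → (A \ T).card < i →
                    f P.1 A = f P.2 A) ∧
                  ¬ ∀ A ⊆ P.1 ∩ P.2, A.card ≤ d → f P.1 A = f P.2 A)).card
        ≤ d.choose i * (t-i).choose (t-d) := by
    intro P hP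
    obtain ⟨hPnu, hPbad⟩ := Finset.mem_filter.1 hP
    push_neg at hPbad
    obtain ⟨A, hAX, hAd, hAne⟩ := hPbad
    have hsub : (((P.1 ∩ P.2).powersetCard (t-d)).filter
        (fun T => (∀ A ⊆ P.1 ∩ P.2, A.card ≤ d → (A \ T).card < i →
                    f P.1 A = f P.2 A) ∧
                  ¬ ∀ A ⊆ P.1 ∩ P.2, A.card ≤ d → f P.1 A = f P.2 A))
        ⊆ ((P.1 ∩ P.2).powersetCard (t-d)).filter (fun T => i ≤ (A \ T).card) := by
      intro T hT
      obtain ⟨hTmem, hT1, _⟩ := Finset.mem_filter.1 hT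
      refine Finset.mem_filter.2 ⟨hTmem, ?_⟩
      by_contra hlt
      exact hAne (hT1 A hAX hAd (not_le.1 hlt))
    calc _ ≤ _ := Finset.card_le_card hsub
      _ ≤ A.card.choose i * (t-i).choose (t-d) :=
          count_bad_T (inter_card_of_mem_nupairs hPnu) hAX
      _ ≤ d.choose i * (t-i).choose (t-d) :=
          Nat.mul_le_mul_right _ (Nat.choose_le_choose i hAd)
  calc _ ≤ _ := Finset.sum_le_sum hbad
    _ = _ := by rw [Finset.sum_const, smul_eq_mul]

set_option maxHeartbeats 1000000 in
lemma scalar_bound {d i t k : ℕ} {α : ℝ} (hα : 0 < α) (hid : i ≤ d)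
    (hdt : d ≤ t) (hαk : α * k ≤ t) :
    (d.choose i : ℝ) * ((t-i).choose (t-d)) * (k:ℝ)^i
      ≤ ((d.choose i : ℝ)^2 * ((i.factorial : ℝ) * (2/α)^i + (2*(d:ℝ)/α+1)^d))
        * (t.choose (t-d)) := by
  have hit : i ≤ t := hid.trans hdt
  have hsym1 : (t-i).choose (t-d) = (t-i).choose (d-i) := by
    rw [show t - d = (t-i) - (d-i) by omega]
    exact Nat.choose_symm (by omega)
  have hsym2 : t.choose (t-d) = t.choose d := Nat.choose_symm hdt
  have hidn : t.choose d * d.choose i = t.choose i * ((t-i).choose (d-i)) :=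
    Nat.choose_mul hid
  have hidR : ((t.choose d : ℝ)) * (d.choose i) = (t.choose i : ℝ) * ((t-i).choose (d-i)) := by
    exact_mod_cast congrArg (Nat.cast (R := ℝ)) hidn
  rw [hsym1, hsym2]
  set a : ℝ := (d.choose i : ℝ) with ha
  set b : ℝ := ((t-i).choose (d-i) : ℝ) with hb
  set c : ℝ := (t.choose d : ℝ) with hc
  set e : ℝ := (t.choose i : ℝ) with he
  have ha0 : 0 ≤ a := Nat.cast_nonneg _
  have hb0 : 0 ≤ b := Nat.cast_nonneg _
  have hc0 : 0 ≤ c := Nat.cast_nonneg _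
  have hF0 : (0:ℝ) ≤ (i.factorial : ℝ) * (2/α)^i := by positivity
  have hG0 : (0:ℝ) ≤ (2*(d:ℝ)/α+1)^d := by positivity
  rcases le_or_gt (2*d) t with hcase | hcase
  · -- large t
    have key : (k:ℝ)^i ≤ (i.factorial : ℝ) * (2/α)^i * e := by
      have h1 : (((t+1-i:ℕ):ℝ))^i / (i.factorial : ℝ) ≤ e := by
        exact_mod_cast Nat.pow_le_choose i t
      have h2 : (((t+1-i:ℕ):ℝ))^i ≤ (i.factorial : ℝ) * e := by
        rw [div_le_iff₀ (by positivity)] at h1; linarith [h1]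
      have hk2 : (k:ℝ) ≤ (2/α) * ((t+1-i:ℕ):ℝ) := by
        have hcast : ((t+1-i:ℕ):ℝ) = (t:ℝ) + 1 - i := by
          have : i ≤ t + 1 := by omega
          push_cast [Nat.cast_sub this]; ring
        rw [hcast]
        rw [div_mul_eq_mul_div, le_div_iff₀ hα]
        have h2d : (2*d:ℝ) ≤ t := by exact_mod_cast hcase
        have hidR' : (i:ℝ) ≤ d := by exact_mod_cast hid
        nlinarith [hαk]
      calc (k:ℝ)^i ≤ ((2/α) * ((t+1-i:ℕ):ℝ))^i :=
            pow_le_pow_left₀ (Nat.cast_nonneg k) hk2 i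
        _ = (2/α)^i * (((t+1-i:ℕ):ℝ))^i := mul_pow _ _ _
        _ ≤ (2/α)^i * ((i.factorial : ℝ) * e) := by
            have : (0:ℝ) ≤ (2/α)^i := by positivity
            exact mul_le_mul_of_nonneg_left h2 this
        _ = (i.factorial : ℝ) * (2/α)^i * e := by ring
    calc a * b * (k:ℝ)^i ≤ a * b * ((i.factorial : ℝ) * (2/α)^i * e) := by
          exact mul_le_mul_of_nonneg_left key (by positivity)
      _ = (i.factorial : ℝ) * (2/α)^i * (e * b) * a := by ring
      _ = (i.factorial : ℝ) * (2/α)^i * (c * a) * a := by rw [← hidR]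
      _ = a^2 * ((i.factorial : ℝ) * (2/α)^i) * c := by ring
      _ ≤ (a^2 * ((i.factorial : ℝ) * (2/α)^i + (2*(d:ℝ)/α+1)^d)) * c := by
          nlinarith [mul_nonneg (mul_nonneg (sq_nonneg a) hG0) hc0]
  · -- small t
    have hbac : b ≤ a * c := by
      have hpos : 0 < t.choose i := Nat.choose_pos hit
      have he1 : (1:ℝ) ≤ e := by rw [he]; exact_mod_cast hpos
      nlinarith [mul_le_mul_of_nonneg_right he1 hb0, hidR]
    have hkb : (k:ℝ)^i ≤ (2*(d:ℝ)/α+1)^d := by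
      have hk1 : (k:ℝ) ≤ 2*(d:ℝ)/α + 1 := by
        have ht2d : (t:ℝ) ≤ 2*d := by exact_mod_cast hcase.le
        rw [div_add' _ _ _ (ne_of_gt hα), le_div_iff₀ hα]
        nlinarith
      calc (k:ℝ)^i ≤ (2*(d:ℝ)/α+1)^i := pow_le_pow_left₀ (Nat.cast_nonneg k) hk1 i
        _ ≤ (2*(d:ℝ)/α+1)^d := by
            have h1 : (0:ℝ) ≤ 2*(d:ℝ)/α := by positivity
            exact pow_le_pow_right₀ (by linarith) hid
    calc a * b * (k:ℝ)^i ≤ a * (a*c) * (k:ℝ)^i :=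
          mul_le_mul_of_nonneg_right (mul_le_mul_of_nonneg_left hbac ha0) (by positivity)
      _ ≤ a * (a*c) * ((2*(d:ℝ)/α+1)^d) :=
          mul_le_mul_of_nonneg_left hkb (by positivity)
      _ = a^2 * ((2*(d:ℝ)/α+1)^d) * c := by ring
      _ ≤ (a^2 * ((i.factorial : ℝ) * (2/α)^i + (2*(d:ℝ)/α+1)^d)) * c := by
          have h2 : 0 ≤ a^2 * ((i.factorial : ℝ) * (2/α)^i) * c :=
            mul_nonneg (mul_nonneg (sq_nonneg a) hF0) hc0
          linarith [h2, (by ring : (a^2 * ((i.factorial : ℝ) * (2/α)^i + (2*(d:ℝ)/α+1)^d)) * c = a^2 * ((2*(d:ℝ)/α+1)^d) * c + a^2 * ((i.factorial : ℝ) * (2/α)^i) * c)]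


set_option maxHeartbeats 1000000 in
/-- Step 1 of the high-dimensional agreement theorem:
`Pr[f_{S₁}|_{T,i-1} ∼ f_{S₂}|_{T,i-1} and f_{S₁} ≁ f_{S₂}] ≤ K·k^{-i}·ε`.
Here `f_{S₁}|_{T,i-1} ∼ f_{S₂}|_{T,i-1}` means `f_{S₁} A = f_{S₂} A` for all
`A ⊆ S₁ ∩ S₂` with `|A| ≤ d` and `|A ∖ T| ≤ i-1` (i.e. `|A ∖ T| < i`), and
`f_{S₁} ∼ f_{S₂}` means agreement on all `A ⊆ S₁ ∩ S₂`, `|A| ≤ d`.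
The bound is written with the factor `k^i` cleared to the left-hand side. -/
theorem stmt9 :
    ∀ (d : ℕ), 0 < d → ∀ α : ℝ, α ∈ Set.Ioo (0:ℝ) 1 →
      ∃ K : ℝ,
        ∀ (n k t : ℕ), t ≤ k → 2 * k ≤ n + t →
          α * (k : ℝ) ≤ (t : ℝ) → d ≤ t →
          ∀ (Γ : Type) [Fintype Γ] [DecidableEq Γ]
            (f : Finset (Fin n) → Finset (Fin n) → Γ) (ε : ℝ),
            (((nupairs n k t).filter
                (fun P => ¬ ∀ A ⊆ P.1 ∩ P.2, A.card ≤ d → f P.1 A = f P.2 A)).card : ℝ) ≤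
              ε * ((nupairs n k t).card : ℝ) →
            ∀ i : ℕ, i ≤ d →
              (((triples n k t (t-d)).filter
                  (fun Q => (∀ A ⊆ Q.1.1 ∩ Q.1.2, A.card ≤ d → (A \ Q.2).card < i →
                              f Q.1.1 A = f Q.1.2 A) ∧
                            ¬ ∀ A ⊆ Q.1.1 ∩ Q.1.2, A.card ≤ d →
                              f Q.1.1 A = f Q.1.2 A)).card : ℝ) * (k : ℝ)^i ≤
                K * ε * ((triples n k t (t-d)).card : ℝ) := by
  intro d hd α hα
  obtain ⟨hα0, hα1⟩ := hα
  set c : ℕ → ℝ := fun j =>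
    (d.choose j : ℝ)^2 * ((j.factorial : ℝ) * (2/α)^j + (2*(d:ℝ)/α+1)^d) with hcdef
  have hc0 : ∀ j, 0 ≤ c j := by
    intro j
    have h1 : (0:ℝ) ≤ (j.factorial : ℝ) * (2/α)^j := by positivity
    have h2 : (0:ℝ) ≤ (2*(d:ℝ)/α+1)^d := by positivity
    have h3 : (0:ℝ) ≤ (d.choose j : ℝ)^2 := sq_nonneg _
    show (0:ℝ) ≤ (d.choose j : ℝ)^2 * ((j.factorial : ℝ) * (2/α)^j + (2*(d:ℝ)/α+1)^d)
    nlinarith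
  refine ⟨∑ j ∈ Finset.range (d+1), c j, ?_⟩
  intro n k t htk hnk hαk hdt Γ _ _ f ε hε i hid
  have hcK : c i ≤ ∑ j ∈ Finset.range (d+1), c j :=
    Finset.single_le_sum (fun j _ => hc0 j) (Finset.mem_range.2 (Nat.lt_succ_of_le hid))
  have hE := event_bound (n := n) (k := k) (t := t) (d := d) (i := i) Γ f
  have htrip := triples_card n k t (t-d)
  set E := ((triples n k t (t-d)).filter
      (fun Q => (∀ A ⊆ Q.1.1 ∩ Q.1.2, A.card ≤ d → (A \ Q.2).card < i →
                  f Q.1.1 A = f Q.1.2 A) ∧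
                ¬ ∀ A ⊆ Q.1.1 ∩ Q.1.2, A.card ≤ d → f Q.1.1 A = f Q.1.2 A)).card with hEdef
  set B := ((nupairs n k t).filter
      (fun P => ¬ ∀ A ⊆ P.1 ∩ P.2, A.card ≤ d → f P.1 A = f P.2 A)).card with hBdef
  set N := (nupairs n k t).card with hNdef
  have hεN : (0:ℝ) ≤ ε * N := le_trans (Nat.cast_nonneg B) hε
  have hscal := scalar_bound (d := d) (i := i) (t := t) (k := k) hα0 hid hdt hαk
  have hM0 : (0:ℝ) ≤ (t.choose (t-d) : ℝ) := Nat.cast_nonneg _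
  calc (E:ℝ) * (k:ℝ)^i
      ≤ ((B * (d.choose i * (t-i).choose (t-d)) : ℕ) : ℝ) * (k:ℝ)^i := by
        exact mul_le_mul_of_nonneg_right (by exact_mod_cast hE) (by positivity)
    _ = (B:ℝ) * ((d.choose i : ℝ) * ((t-i).choose (t-d) : ℝ) * (k:ℝ)^i) := by
        push_cast; ring
    _ ≤ (B:ℝ) * (c i * (t.choose (t-d) : ℝ)) :=
        mul_le_mul_of_nonneg_left hscal (Nat.cast_nonneg B)
    _ ≤ (ε * N) * (c i * (t.choose (t-d) : ℝ)) :=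
        mul_le_mul_of_nonneg_right hε (mul_nonneg (hc0 i) hM0)
    _ = c i * (ε * (N * (t.choose (t-d) : ℝ))) := by ring
    _ ≤ (∑ j ∈ Finset.range (d+1), c j) * (ε * (N * (t.choose (t-d) : ℝ))) := by
        have hnn : (0:ℝ) ≤ ε * (N * (t.choose (t-d) : ℝ)) := by
          have := mul_nonneg hεN hM0; linarith [this, (by ring : ε * N * (t.choose (t-d):ℝ) = ε * (N * (t.choose (t-d):ℝ)))]
        exact mul_le_mul_of_nonneg_right hcK hnn
    _ = (∑ j ∈ Finset.range (d+1), c j) * ε * ((triples n k t (t-d)).card : ℝ) := by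
        rw [htrip]; push_cast; ring
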